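/- If every doctor finds every hospital in region r acceptable only through contracts counted in ξ, and μ is the FDA outcome, then for every region r the FDA outcome satisfies the regional cap: Σ_{h∈r} |μ_h| ≤ q_r, and for every hospital h the capacity: |μ_h| ≤ q_h; i.e., the FDA algorithm always produces a feasible matching. -/

import Mathlib

open Finset

variable {D H : Type*} [Fintype D] [DecidableEq D] [Fintype H] [DecidableEq H]

/-- The hospital doctor `d` proposes to, given the set `A` of (doctor, hospital)
pairs `(d, h)` such that `h` has already rejected `d`.  Doctor preferences are
given by `pref d`, the list of `d`'s acceptable hospitals in order of strict
preference. -/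
def propose (pref : D → List H) (A : Finset (D × H)) (d : D) : Option H :=
  (pref d).find? (fun h => decide ((d, h) ∉ A))

/-- The set of doctors currently applying to hospital `h`. -/
def proposers (pref : D → List H) (A : Finset (D × H)) (h : H) : Finset D :=
  univ.filter (fun d => propose pref A d = some h)

/-- The (up to) `n` best doctors of `S` according to hospital `h`'s strict
priority order (lower `prio h` value means more preferred). -/
def topN (prio : H → D → ℕ) (h : H) (n : ℕ) (S : Finset D) : Finset D :=
  S.filter (fun d => (S.filter (fun d' => prio h d' < prio h d)).card < n)

/-- The doctors tentatively kept by hospital `h`: the best acceptable applicants,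
up to the capacity `q h`. -/
def kept (pref : D → List H) (prio : H → D → ℕ) (acc : H → Finset D) (q : H → ℕ)
    (A : Finset (D × H)) (h : H) : Finset D :=
  topN prio h (q h) (proposers pref A h ∩ acc h)

/-- One round of the doctor-proposing deferred acceptance algorithm, recorded via
the set of rejections so far: every applicant not tentatively kept is rejected. -/
def daStep (pref : D → List H) (prio : H → D → ℕ) (acc : H → Finset D) (q : H → ℕ)
    (A : Finset (D × H)) : Finset (D × H) :=
  A ∪ univ.filter (fun p : D × H =>
    propose pref A p.1 = some p.2 ∧ p.1 ∉ kept pref prio acc q A p.2)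

/-- The outcome of the doctor-proposing deferred acceptance algorithm. -/
def daMatch (pref : D → List H) (prio : H → D → ℕ) (acc : H → Finset D) (q : H → ℕ)
    (d : D) : Option H :=
  propose pref ((daStep pref prio acc q)^[Fintype.card D * Fintype.card H + 1] ∅) d

/-- The set of doctors matched to hospital `h` under matching `μ`. -/
def matchedSet (μ : D → Option H) (h : H) : Finset D :=
  univ.filter (fun d => μ d = some h)

/-- The rank of an outcome in doctor `d`'s preference list (smaller is better;
being unmatched ranks just below the least preferred acceptable hospital). -/
def rankOf (pref : D → List H) (d : D) : Option H → ℕ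
  | none => (pref d).length
  | some h => (pref d).idxOf h

/-- Doctor `d` strictly prefers hospital `h` to outcome `o`. -/
def DPrefers (pref : D → List H) (d : D) (h : H) (o : Option H) : Prop :=
  h ∈ pref d ∧ rankOf pref d (some h) < rankOf pref d o

/-- Individual rationality: nobody is matched with an unacceptable partner. -/
def IndivRat (pref : D → List H) (acc : H → Finset D) (μ : D → Option H) : Prop :=
  ∀ d h, μ d = some h → h ∈ pref d ∧ d ∈ acc h

/-- `(d, h)` is a blocking pair of `μ`. -/
def Blocks (pref : D → List H) (prio : H → D → ℕ) (acc : H → Finset D) (q : H → ℕ)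
    (μ : D → Option H) (d : D) (h : H) : Prop :=
  DPrefers pref d h (μ d) ∧
    (((matchedSet μ h).card < q h ∧ d ∈ acc h) ∨
      ∃ d' ∈ matchedSet μ h, prio h d < prio h d')

/-- Stability: individual rationality, capacities respected, and no blocking pair. -/
def IsStable (pref : D → List H) (prio : H → D → ℕ) (acc : H → Finset D) (q : H → ℕ)
    (μ : D → Option H) : Prop :=
  IndivRat pref acc μ ∧ (∀ h, (matchedSet μ h).card ≤ q h) ∧
    ∀ d h, ¬ Blocks pref prio acc q μ d h

section FDA

variable {R : Type*} [Fintype R] [DecidableEq R]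

/-- Number of doctors currently kept in region `r`. -/
def regionCount (region : H → R) (st : H → Finset D) (r : R) : ℕ :=
  ∑ h ∈ univ.filter (fun h => region h = r), (st h).card

/-- The best remaining acceptable applicant(s) of hospital `h` (a singleton when
`prio h` is injective): doctors of `pool` not yet kept with minimal priority value. -/
def bestRemaining (prio : H → D → ℕ) (h : H) (pool held : Finset D) : Finset D :=
  (pool \ held).filter (fun d => ∀ d' ∈ pool \ held, prio h d ≤ prio h d')

/-- One turn of hospital `h` in the round-robin stage of the FDA algorithm:
if the regional cap and its own physical capacity are not yet binding, `h`
additionally keeps its best remaining applicant. -/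
def fdaTurn (pref : D → List H) (prio : H → D → ℕ) (acc : H → Finset D) (q : H → ℕ)
    (region : H → R) (qreg : R → ℕ) (A : Finset (D × H)) (st : H → Finset D)
    (h : H) : H → Finset D :=
  if regionCount region st (region h) < qreg (region h) ∧ (st h).card < q h then
    Function.update st h
      (st h ∪ bestRemaining prio h (proposers pref A h ∩ acc h) (st h))
  else st

/-- The doctors kept in region `r` given rejections `A`: first each hospital fills
its target capacity with its best acceptable applicants, then hospitals take turns
in the fixed order `ord r` keeping additional doctors until the regional cap or the
physical capacities bind or the applicant pools empty. -/
def regionKept (pref : D → List H) (prio : H → D → ℕ) (acc : H → Finset D) (q : H → ℕ)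
    (region : H → R) (qreg : R → ℕ) (tgt : H → ℕ) (ord : R → List H)
    (A : Finset (D × H)) (r : R) : H → Finset D :=
  (fun st => (ord r).foldl (fdaTurn pref prio acc q region qreg A) st)^[qreg r + Fintype.card D + 1]
    (fun h => topN prio h (tgt h) (proposers pref A h ∩ acc h))

/-- The doctors tentatively kept by hospital `h` in the FDA algorithm. -/
def fdaKept (pref : D → List H) (prio : H → D → ℕ) (acc : H → Finset D) (q : H → ℕ)
    (region : H → R) (qreg : R → ℕ) (tgt : H → ℕ) (ord : R → List H)
    (A : Finset (D × H)) (h : H) : Finset D :=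
  regionKept pref prio acc q region qreg tgt ord A (region h) h

/-- One round of the flexible deferred acceptance algorithm, recorded via the set
of rejections so far. -/
def fdaStep (pref : D → List H) (prio : H → D → ℕ) (acc : H → Finset D) (q : H → ℕ)
    (region : H → R) (qreg : R → ℕ) (tgt : H → ℕ) (ord : R → List H)
    (A : Finset (D × H)) : Finset (D × H) :=
  A ∪ univ.filter (fun p : D × H =>
    propose pref A p.1 = some p.2 ∧
      p.1 ∉ fdaKept pref prio acc q region qreg tgt ord A p.2)

/-- The outcome of the flexible deferred acceptance (FDA) algorithm. -/
def fdaMatch (pref : D → List H) (prio : H → D → ℕ) (acc : H → Finset D) (q : H → ℕ)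
    (region : H → R) (qreg : R → ℕ) (tgt : H → ℕ) (ord : R → List H) (d : D) :
    Option H :=
  propose pref
    ((fdaStep pref prio acc q region qreg tgt ord)^[Fintype.card D * Fintype.card H + 1] ∅) d

end FDA

section Aux

variable {R : Type*} [Fintype R] [DecidableEq R]

lemma bestRemaining_card_le (prio : H → D → ℕ) (h : H)
    (hinj : Function.Injective (prio h)) (pool held : Finset D) :
    (bestRemaining prio h pool held).card ≤ 1 := by
  apply Finset.card_le_one.2
  intro a ha b hb
  simp only [bestRemaining, Finset.mem_filter] at ha hb
  exact hinj (le_antisymm (ha.2 b hb.1) (hb.2 a ha.1))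

lemma topN_card_le (prio : H → D → ℕ) (h : H) (hinj : Function.Injective (prio h))
    (n : ℕ) (S : Finset D) : (topN prio h n S).card ≤ n := by
  classical
  set f : D → ℕ := fun d => (S.filter (fun d' => prio h d' < prio h d)).card with hf
  have hmono : ∀ x ∈ S, ∀ y : D, prio h x < prio h y → f x < f y := by
    intro x hx y hxy
    apply Finset.card_lt_card
    rw [Finset.ssubset_iff_of_subset]
    · refine ⟨x, ?_, ?_⟩
      · simp only [Finset.mem_filter]; exact ⟨hx, hxy⟩
      · simp only [Finset.mem_filter, not_and, not_lt]
        intro _; exact le_rfl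
    · intro d hd
      simp only [Finset.mem_filter] at hd ⊢
      exact ⟨hd.1, hd.2.trans hxy⟩
  have hinjOn : Set.InjOn f (topN prio h n S : Finset D) := by
    intro a ha b hb hab
    by_contra hne
    simp only [topN, Finset.coe_filter, Set.mem_setOf_eq] at ha hb
    have hne' : prio h a ≠ prio h b := fun e => hne (hinj e)
    rcases hne'.lt_or_gt with hlt | hlt
    · exact absurd hab (hmono a ha.1 b hlt).ne
    · exact absurd hab.symm (hmono b hb.1 a hlt).ne
  have himg : (topN prio h n S).image f ⊆ Finset.range n := by
    intro m hm
    simp only [Finset.mem_image] at hm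
    obtain ⟨d, hd, rfl⟩ := hm
    simp only [topN, Finset.mem_filter] at hd
    exact Finset.mem_range.2 hd.2
  calc (topN prio h n S).card = ((topN prio h n S).image f).card :=
        (Finset.card_image_of_injOn hinjOn).symm
    _ ≤ (Finset.range n).card := Finset.card_le_card himg
    _ = n := Finset.card_range n

lemma fdaTurn_inv (pref : D → List H) (prio : H → D → ℕ) (acc : H → Finset D) (q : H → ℕ)
    (region : H → R) (qreg : R → ℕ) (A : Finset (D × H)) (st : H → Finset D) (h : H)
    (hinj : ∀ h, Function.Injective (prio h))
    (h1 : ∀ h', (st h').card ≤ q h') (h2 : ∀ r, regionCount region st r ≤ qreg r) :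
    (∀ h', ((fdaTurn pref prio acc q region qreg A st h) h').card ≤ q h') ∧
      ∀ r, regionCount region (fdaTurn pref prio acc q region qreg A st h) r ≤ qreg r := by
  classical
  unfold fdaTurn
  split
  case isTrue hcond =>
    have hB : (bestRemaining prio h (proposers pref A h ∩ acc h) (st h)).card ≤ 1 :=
      bestRemaining_card_le prio h (hinj h) _ _
    have hcard : (st h ∪ bestRemaining prio h (proposers pref A h ∩ acc h) (st h)).card ≤
        (st h).card + 1 :=
      le_trans (Finset.card_union_le _ _) (by omega)
    constructor
    · intro h'
      rcases eq_or_ne h' h with rfl | hne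
      · rw [Function.update_self]
        have := hcond.2
        omega
      · rw [Function.update_of_ne hne]
        exact h1 h'
    · intro r
      unfold regionCount
      rcases eq_or_ne (region h) r with rfl | hne
      · have hmem : h ∈ univ.filter (fun h' => region h' = region h) := by
          simp
        rw [Finset.sum_eq_sum_sdiff_singleton_add hmem]
        have hdiff : ∀ x ∈ univ.filter (fun h' => region h' = region h) \ {h},
            (Function.update st h
              (st h ∪ bestRemaining prio h (proposers pref A h ∩ acc h) (st h)) x).card
              = (st x).card := by
          intro x hx
          rw [Function.update_of_ne (Finset.notMem_singleton.1 (Finset.mem_sdiff.1 hx).2)]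
        rw [Finset.sum_congr rfl hdiff, Function.update_self]
        have hold : regionCount region st (region h) =
            (∑ x ∈ univ.filter (fun h' => region h' = region h) \ {h}, (st x).card)
              + (st h).card := by
          unfold regionCount
          rw [Finset.sum_eq_sum_sdiff_singleton_add hmem]
        have hlt := hcond.1
        have hle := h2 (region h)
        omega
      · have : ∀ x ∈ univ.filter (fun h' => region h' = r),
            (Function.update st h
              (st h ∪ bestRemaining prio h (proposers pref A h ∩ acc h) (st h)) x).card
              = (st x).card := by
          intro x hx
          simp only [Finset.mem_filter] at hx
          rw [Function.update_of_ne]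
          rintro rfl
          exact hne hx.2
        rw [Finset.sum_congr rfl this]
        exact h2 r
  case isFalse => exact ⟨h1, h2⟩

lemma foldl_inv (pref : D → List H) (prio : H → D → ℕ) (acc : H → Finset D) (q : H → ℕ)
    (region : H → R) (qreg : R → ℕ) (A : Finset (D × H))
    (hinj : ∀ h, Function.Injective (prio h)) (l : List H) (st : H → Finset D)
    (h1 : ∀ h', (st h').card ≤ q h') (h2 : ∀ r, regionCount region st r ≤ qreg r) :
    (∀ h', ((l.foldl (fdaTurn pref prio acc q region qreg A) st) h').card ≤ q h') ∧
      ∀ r, regionCount region (l.foldl (fdaTurn pref prio acc q region qreg A) st) r ≤ qreg r := by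
  induction l generalizing st with
  | nil => exact ⟨h1, h2⟩
  | cons a l ih =>
    obtain ⟨g1, g2⟩ := fdaTurn_inv pref prio acc q region qreg A st a hinj h1 h2
    exact ih _ g1 g2

lemma regionKept_inv (pref : D → List H) (prio : H → D → ℕ) (acc : H → Finset D) (q : H → ℕ)
    (region : H → R) (qreg : R → ℕ) (tgt : H → ℕ) (ord : R → List H) (A : Finset (D × H))
    (r : R) (hinj : ∀ h, Function.Injective (prio h))
    (htgt : ∀ r, ∑ h ∈ univ.filter (fun h => region h = r), tgt h ≤ qreg r)
    (htq : ∀ h, tgt h ≤ q h) :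
    (∀ h', ((regionKept pref prio acc q region qreg tgt ord A r) h').card ≤ q h') ∧
      ∀ r', regionCount region (regionKept pref prio acc q region qreg tgt ord A r) r' ≤ qreg r' := by
  unfold regionKept
  generalize qreg r + Fintype.card D + 1 = n
  induction n with
  | zero =>
    simp only [Function.iterate_zero, id_eq]
    constructor
    · intro h'
      exact le_trans (topN_card_le prio h' (hinj h') _ _) (htq h')
    · intro r'
      refine le_trans ?_ (htgt r')
      exact Finset.sum_le_sum fun h' _ => topN_card_le prio h' (hinj h') _ _
  | succ n ih =>
    rw [Function.iterate_succ_apply']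
    exact foldl_inv pref prio acc q region qreg A hinj (ord r) _ ih.1 ih.2

lemma iterate_fixed {α : Type*} [Fintype α] [DecidableEq α] (f : Finset α → Finset α)
    (hf : ∀ A, A ⊆ f A) : f (f^[Fintype.card α + 1] ∅) = f^[Fintype.card α + 1] ∅ := by
  have key : ∀ n : ℕ, f^[n + 1] ∅ = f^[n] ∅ ∨ n + 1 ≤ (f^[n + 1] (∅ : Finset α)).card := by
    intro n
    induction n with
    | zero =>
      by_cases h : f ∅ = (∅ : Finset α)
      · left; simpa using h
      · right
        have : (f^[1] (∅ : Finset α)).Nonempty := by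
          rw [Finset.nonempty_iff_ne_empty]; simpa using h
        simpa [Nat.succ_le_iff, Finset.card_pos] using this
    | succ n ih =>
      simp only [Function.iterate_succ_apply'] at ih ⊢
      rcases ih with heq | hle
      · left
        rw [heq]; exact heq
      · by_cases h : f (f (f^[n] (∅ : Finset α))) = f (f^[n] ∅)
        · left; exact h
        · right
          have := Finset.card_lt_card ((hf _).ssubset_of_ne (Ne.symm h))
          omega
  rcases key (Fintype.card α) with heq | hle
  · rw [heq, ← Function.iterate_succ_apply' f]
    exact heq
  · have := Finset.card_le_univ (f^[Fintype.card α + 1] (∅ : Finset α))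
    omega

end Aux

/-- the FDA algorithm always produces a feasible matching: every
hospital's physical capacity and every regional cap are respected by its outcome. -/
theorem fda_feasible
    {R : Type*} [Fintype R] [DecidableEq R]
    (pref : D → List H) (prio : H → D → ℕ) (acc : H → Finset D) (q : H → ℕ)
    (region : H → R) (qreg : R → ℕ) (tgt : H → ℕ) (ord : R → List H)
    (hinj : ∀ h, Function.Injective (prio h)) (hnd : ∀ d, (pref d).Nodup)
    (hord : ∀ r, (ord r).Nodup ∧ ∀ h, h ∈ ord r ↔ region h = r)
    (htgt : ∀ r, ∑ h ∈ univ.filter (fun h => region h = r), tgt h ≤ qreg r)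
    (htq : ∀ h, tgt h ≤ q h) :
    (∀ h, (matchedSet (fdaMatch pref prio acc q region qreg tgt ord) h).card ≤ q h) ∧
      ∀ r, ∑ h ∈ univ.filter (fun h => region h = r),
          (matchedSet (fdaMatch pref prio acc q region qreg tgt ord) h).card ≤ qreg r := by
  classical
  set F := fdaStep pref prio acc q region qreg tgt ord with hF
  set A := F^[Fintype.card D * Fintype.card H + 1] (∅ : Finset (D × H)) with hA
  have hmono : ∀ B : Finset (D × H), B ⊆ F B := fun B => Finset.subset_union_left
  have hfix : F A = A := by
    rw [hA, ← Fintype.card_prod]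
    exact iterate_fixed F hmono
  have hkeep : ∀ d h, propose pref A d = some h →
      d ∈ fdaKept pref prio acc q region qreg tgt ord A h := by
    intro d h hp
    by_contra hd
    have hmem : (d, h) ∈ F A :=
      Finset.mem_union_right _ (Finset.mem_filter.2 ⟨Finset.mem_univ _, hp, hd⟩)
    rw [hfix] at hmem
    have := List.find?_some hp
    simp only [decide_eq_true_eq] at this
    exact this hmem
  have hmatched : ∀ h, matchedSet (fdaMatch pref prio acc q region qreg tgt ord) h ⊆
      fdaKept pref prio acc q region qreg tgt ord A h := by
    intro h d hd
    simp only [matchedSet, Finset.mem_filter, Finset.mem_univ, true_and] at hd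
    exact hkeep d h hd
  have hinv := fun r => regionKept_inv pref prio acc q region qreg tgt ord A r hinj htgt htq
  constructor
  · intro h
    refine le_trans (Finset.card_le_card (hmatched h)) ?_
    exact (hinv (region h)).1 h
  · intro r
    refine le_trans ?_ ((hinv r).2 r)
    unfold regionCount
    refine Finset.sum_le_sum ?_
    intro h hh
    simp only [Finset.mem_filter] at hh
    refine le_trans (Finset.card_le_card (hmatched h)) ?_
    unfold fdaKept
    rw [hh.2]
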